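/- arXiv:2210.11874 — 3 statements merged into one kernel-verified Lean document; each statement's English description precedes it below -/
import Mathlib

section
/- Let K ≥ 3 and let T ∈ ℝ^(K×K) be a matrix such that for every x ∈ ℝ there exists y ∈ ℝ with v(x)ᵀ T = v(y)ᵀ, where v(x) = (1, x, …, x^(K−1)). Then there exist t₀, t₁ ∈ ℝ such that T is the generalized Pascal matrix with parameters (t₀, t₁), i.e., T(i,j) = C(j,i) t₀^(j−i) t₁^i for i ≤ j and T(i,j) = 0 for i > j. -/
open Matrix

def pascalMatrix (K : ℕ) (t₀ t₁ : ℝ) : Matrix (Fin K) (Fin K) ℝ :=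
  fun i j => if (i : ℕ) ≤ (j : ℕ) then
    (Nat.choose (j : ℕ) (i : ℕ) : ℝ) * t₀ ^ ((j : ℕ) - (i : ℕ)) * t₁ ^ (i : ℕ) else 0

def vandVec (K : ℕ) (x : ℝ) : Fin K → ℝ := fun j => x ^ (j : ℕ)

open Polynomial in
lemma coeff_linear_pow (a b : ℝ) (n i : ℕ) :
    ((C a * X + C b) ^ n).coeff i = (n.choose i : ℝ) * b ^ (n - i) * a ^ i := by
  rw [add_pow]
  rw [finset_sum_coeff]
  have : ∀ k ∈ Finset.range (n+1),
      ((C a * X) ^ k * (C b) ^ (n - k) * (n.choose k : ℝ[X])).coeff i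
        = if k = i then (n.choose i : ℝ) * b ^ (n - i) * a ^ i else 0 := by
    intro k hk
    have : (C a * X) ^ k * (C b) ^ (n - k) * (n.choose k : ℝ[X])
        = C (a ^ k * b ^ (n-k) * (n.choose k : ℝ)) * X ^ k := by
      rw [mul_pow, ← C_pow, ← C_pow, ← C_eq_natCast, C_mul, C_mul]
      ring
    rw [this, coeff_C_mul, coeff_X_pow]
    by_cases hki : k = i
    · subst hki; simp; ring
    · simp [hki, Ne.symm hki]
  rw [Finset.sum_congr rfl this, Finset.sum_ite_eq' (Finset.range (n+1))]
  by_cases hi : i ∈ Finset.range (n+1)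
  · simp [hi]
  · simp at hi
    simp [Nat.choose_eq_zero_of_lt hi]

theorem stmt_1 (K : ℕ) (hK : 3 ≤ K) (T : Matrix (Fin K) (Fin K) ℝ)
    (h : ∀ x : ℝ, ∃ y : ℝ, Matrix.vecMul (vandVec K x) T = vandVec K y) :
    ∃ t₀ t₁ : ℝ, T = pascalMatrix K t₀ t₁ := by
  classical
  open Polynomial in
  -- the column polynomials
  let q : Fin K → ℝ[X] := fun j => ∑ i : Fin K, C (T i j) * X ^ (i : ℕ)
  have heval : ∀ (x : ℝ) (j : Fin K), (q j).eval x = Matrix.vecMul (vandVec K x) T j := by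
    intro x j
    simp only [q, eval_finset_sum, eval_mul, eval_C, eval_pow, eval_X,
      Matrix.vecMul, dotProduct, vandVec]
    exact Finset.sum_congr rfl fun _ _ => mul_comm _ _
  have hcoeff : ∀ (i j : Fin K), (q j).coeff (i : ℕ) = T i j := by
    intro i j
    simp only [q, finset_sum_coeff, coeff_C_mul, coeff_X_pow]
    rw [Finset.sum_eq_single i]
    · simp
    · intro b _ hb
      have : (i : ℕ) ≠ (b : ℕ) := by simpa [Fin.val_inj] using Ne.symm hb
      simp [this]
    · simp
  have hdeg : ∀ j : Fin K, (q j).natDegree ≤ K - 1 := by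
    intro j
    refine (natDegree_sum_le _ _).trans ?_
    rw [Finset.fold_max_le]
    refine ⟨Nat.zero_le _, fun i _ => ?_⟩
    exact (natDegree_C_mul_X_pow_le _ _).trans (Nat.le_sub_one_of_lt i.isLt)
  have h1K : 1 < K := by omega
  have hpow : ∀ j : Fin K, q j = (q ⟨1, h1K⟩) ^ (j : ℕ) := by
    intro j
    apply Polynomial.funext
    intro x
    obtain ⟨y, hy⟩ := h x
    have h1 : (q ⟨1, h1K⟩).eval x = y := by
      rw [heval, hy]; simp [vandVec]
    have h2 : (q j).eval x = y ^ (j : ℕ) := by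
      rw [heval, hy]; simp [vandVec]
    simp [h1, h2]
  -- degree of q 1 is at most 1
  have hd1 : (q ⟨1, h1K⟩).natDegree ≤ 1 := by
    have hlt : K - 1 < K := by omega
    have := hdeg ⟨K - 1, hlt⟩
    rw [hpow ⟨K - 1, hlt⟩, natDegree_pow] at this
    have h2 : 2 ≤ K - 1 := by omega
    nlinarith [this, h2]
  set t₀ := (q ⟨1, h1K⟩).coeff 0 with ht₀
  set t₁ := (q ⟨1, h1K⟩).coeff 1 with ht₁
  have hq1 : q ⟨1, h1K⟩ = C t₁ * X + C t₀ := eq_X_add_C_of_natDegree_le_one hd1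
  refine ⟨t₀, t₁, ?_⟩
  ext i j
  rw [← hcoeff i j, hpow j, hq1, coeff_linear_pow, pascalMatrix]
  by_cases hij : (i : ℕ) ≤ (j : ℕ)
  · simp [hij]
  · simp only [hij, if_false]
    rw [Nat.choose_eq_zero_of_lt (by omega)]
    simp
end

section
/- Suppose Y = V(x) W with V(x) ∈ ℝ^(N×K) the Vandermonde matrix at points x and W ∈ ℝ^(K×L). Then for any t₀ ∈ ℝ and t₁ ≠ 0, the pair (x′, W′) with x′ᵢ = t₀ + t₁xᵢ and W′ = T_(t₀,t₁)^(−1) W also satisfies Y = V(x′) W′. Hence the factorization model Y = V(x)W is not identifiable beyond affine reparametrization of x. -/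
open Matrix

def vandMatrix (N K : ℕ) (x : Fin N → ℝ) : Matrix (Fin N) (Fin K) ℝ :=
  fun i j => x i ^ (j : ℕ)

lemma pascal_det (K : ℕ) (t₀ t₁ : ℝ) :
    (pascalMatrix K t₀ t₁).det = ∏ i : Fin K, t₁ ^ (i : ℕ) := by
  have h : (pascalMatrix K t₀ t₁).BlockTriangular id := by
    intro i j hij
    simp only [pascalMatrix]
    rw [if_neg]
    exact Nat.not_le.mpr hij
  rw [Matrix.det_of_upperTriangular h]
  apply Finset.prod_congr rfl
  intro i _
  simp [pascalMatrix]

lemma vand_mul_pascal (N K : ℕ) (x : Fin N → ℝ) (t₀ t₁ : ℝ) :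
    vandMatrix N K (fun i => t₀ + t₁ * x i) = vandMatrix N K x * pascalMatrix K t₀ t₁ := by
  ext i j
  simp only [vandMatrix, pascalMatrix, Matrix.mul_apply]
  rw [show t₀ + t₁ * x i = t₁ * x i + t₀ by ring, add_pow]
  rw [Fin.sum_univ_eq_sum_range
    (fun k => x i ^ k * (if k ≤ (j : ℕ) then
      ((j : ℕ).choose k : ℝ) * t₀ ^ ((j : ℕ) - k) * t₁ ^ k else 0))]
  simp only [mul_ite, mul_zero]
  rw [← Finset.sum_filter]
  have hf : (Finset.range K).filter (fun k => k ≤ (j : ℕ)) = Finset.range ((j : ℕ) + 1) := by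
    ext k
    simp [Nat.lt_succ_iff]
    intro hk
    exact lt_of_le_of_lt hk j.isLt
  rw [hf]
  apply Finset.sum_congr rfl
  intro k _
  rw [mul_pow]
  ring

/-- Non-identifiability of the factorization `Y = V(x) W` beyond affine
reparametrization of `x`. -/
theorem stmt_8 (N K L : ℕ) (x : Fin N → ℝ) (W : Matrix (Fin K) (Fin L) ℝ)
    (Y : Matrix (Fin N) (Fin L) ℝ) (hY : Y = vandMatrix N K x * W)
    (t₀ t₁ : ℝ) (ht₁ : t₁ ≠ 0) :
    Y = vandMatrix N K (fun i => t₀ + t₁ * x i) * ((pascalMatrix K t₀ t₁)⁻¹ * W) := by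
  have hdet : IsUnit (pascalMatrix K t₀ t₁).det := by
    rw [pascal_det]
    exact (Finset.prod_ne_zero_iff.mpr (fun i _ => pow_ne_zero _ ht₁)).isUnit
  rw [vand_mul_pascal, hY, Matrix.mul_assoc, ← Matrix.mul_assoc (pascalMatrix K t₀ t₁),
    Matrix.mul_nonsing_inv _ hdet, Matrix.one_mul]
end

section
/- Let f(x) = ½‖P V(x)‖_F² where P ∈ ℝ^(N×N) is a symmetric idempotent matrix and V(x) is the N×K Vandermonde matrix at points x ∈ ℝ^N. Then the gradient of f is ∇f(x) = diag(P V(x) D_Kᵀ V(x)ᵀ), where D_K = SupDiag(1, 2, …, K−1) is the K×K polynomial differentiation matrix and diag(·) extracts the diagonal of a matrix as a vector. -/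
open Matrix

/-- Polynomial differentiation matrix `D_K = SupDiag(1, …, K−1)`. -/
def diffMatrix (K : ℕ) : Matrix (Fin K) (Fin K) ℝ :=
  fun i j => if (i : ℕ) + 1 = (j : ℕ) then (j : ℕ) else 0

/-- The gradient of `f(x) = ½‖P V(x)‖_F²` is `diag(P V(x) D_Kᵀ V(x)ᵀ)`. -/
theorem stmt_15 (N K : ℕ) (P : Matrix (Fin N) (Fin N) ℝ)
    (hPsymm : Pᵀ = P) (hPidem : P * P = P)
    (f : EuclideanSpace ℝ (Fin N) → ℝ)
    (hf : f = fun (x : EuclideanSpace ℝ (Fin N)) => (1 / 2 : ℝ) *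
      ∑ i : Fin N, ∑ j : Fin K, (P * vandMatrix N K x) i j ^ 2)
    (x : EuclideanSpace ℝ (Fin N)) :
    HasGradientAt f
      ((WithLp.toLp 2 (fun i => (P * vandMatrix N K x * (diffMatrix K)ᵀ * (vandMatrix N K x)ᵀ) i i) :
        EuclideanSpace ℝ (Fin N))) x := by
  rw [hasGradientAt_iff_hasFDerivAt]
  subst hf
  have hproj : ∀ k : Fin N, HasFDerivAt (fun y : EuclideanSpace ℝ (Fin N) => y k)
      (EuclideanSpace.proj k : EuclideanSpace ℝ (Fin N) →L[ℝ] ℝ) x := by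
    intro k
    have := (EuclideanSpace.proj (𝕜 := ℝ) k).hasFDerivAt (x := x)
    exact this
  have hpow : ∀ (k : Fin N) (n : ℕ),
      HasFDerivAt (fun y : EuclideanSpace ℝ (Fin N) => y k ^ n)
        (((n : ℝ) * x k ^ (n - 1)) •
          (EuclideanSpace.proj k : EuclideanSpace ℝ (Fin N) →L[ℝ] ℝ)) x := by
    intro k n
    induction n with
    | zero => simpa using hasFDerivAt_const (1 : ℝ) x
    | succ n ih =>
      have h := ih.mul (hproj k)
      have heq : (fun y : EuclideanSpace ℝ (Fin N) => y k ^ (n + 1))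
          = fun y => y k ^ n * y k := by
        funext y; rw [pow_succ]
      rw [heq]
      convert! h using 1
      ext v
      simp only [ContinuousLinearMap.add_apply, ContinuousLinearMap.smul_apply, smul_eq_mul]
      cases n with
      | zero => simp
      | succ m =>
        simp only [Nat.add_sub_cancel, Nat.cast_add, Nat.cast_one]
        ring
  have hg : ∀ (i : Fin N) (j : Fin K),
      HasFDerivAt (fun y : EuclideanSpace ℝ (Fin N) => ∑ k, P i k * y k ^ (j : ℕ))
        (∑ k, (P i k * (j : ℕ) * x k ^ ((j : ℕ) - 1)) •
          (EuclideanSpace.proj k : EuclideanSpace ℝ (Fin N) →L[ℝ] ℝ)) x := by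
    intro i j
    apply HasFDerivAt.fun_sum
    intro k _
    have h2 := (hpow k (j : ℕ)).const_mul (P i k)
    convert! h2 using 1
    ext v
    simp only [ContinuousLinearMap.smul_apply, smul_eq_mul]
    ring
  set L : Fin N → Fin K → (EuclideanSpace ℝ (Fin N) →L[ℝ] ℝ) := fun i j =>
    ∑ k, (P i k * (j : ℕ) * x k ^ ((j : ℕ) - 1)) •
      (EuclideanSpace.proj k : EuclideanSpace ℝ (Fin N) →L[ℝ] ℝ) with hL
  set g : Fin N → Fin K → ℝ := fun i j => ∑ k, P i k * x k ^ (j : ℕ) with hgdef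
  have hD : HasFDerivAt
      (fun y : EuclideanSpace ℝ (Fin N) => (1 / 2 : ℝ) *
        ∑ i : Fin N, ∑ j : Fin K, (P * vandMatrix N K y) i j ^ 2)
      ((1 / 2 : ℝ) • ∑ i : Fin N, ∑ j : Fin K, (g i j • L i j + g i j • L i j)) x := by
    have hrw : ∀ y : EuclideanSpace ℝ (Fin N),
        (∑ i : Fin N, ∑ j : Fin K, (P * vandMatrix N K y) i j ^ 2)
        = ∑ i : Fin N, ∑ j : Fin K, (∑ k, P i k * y k ^ (j : ℕ)) * (∑ k, P i k * y k ^ (j : ℕ)) := by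
      intro y
      refine Finset.sum_congr rfl fun i _ => Finset.sum_congr rfl fun j _ => ?_
      rw [Matrix.mul_apply, sq]; rfl
    simp only [hrw]
    exact (HasFDerivAt.fun_sum (fun i _ => HasFDerivAt.fun_sum
      (fun j _ => (hg i j).mul (hg i j)))).const_mul (1 / 2 : ℝ)
  convert! hD using 1
  ext v
  simp only [InnerProductSpace.toDual_apply_apply, PiLp.inner_apply, RCLike.inner_apply,
    conj_trivial, ContinuousLinearMap.smul_apply, ContinuousLinearMap.sum_apply,
    ContinuousLinearMap.add_apply, PiLp.proj_apply, smul_eq_mul, hL]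
  -- key matrix identities
  have hkey : ∀ (j : Fin K) (k : Fin N),
      (∑ i, g i j * P i k) = (P * vandMatrix N K x) k j := by
    intro j k
    have h1 : (∑ i, g i j * P i k) = (Pᵀ * (P * vandMatrix N K x)) k j := by
      rw [Matrix.mul_apply]
      refine Finset.sum_congr rfl fun i _ => ?_
      rw [Matrix.transpose_apply, Matrix.mul_apply]
      simp only [hgdef, vandMatrix]
      ring
    rw [h1, hPsymm, ← Matrix.mul_assoc, hPidem]
  have hdiag : ∀ m : Fin N,
      (P * vandMatrix N K x * (diffMatrix K)ᵀ * (vandMatrix N K x)ᵀ) m m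
        = ∑ j : Fin K, (P * vandMatrix N K x) m j * ((j : ℕ) : ℝ) * x m ^ ((j : ℕ) - 1) := by
    intro m
    rw [Matrix.mul_apply]
    have hmid : ∀ b : Fin K, (P * vandMatrix N K x * (diffMatrix K)ᵀ) m b
        = ∑ a : Fin K, (P * vandMatrix N K x) m a *
            (if (b : ℕ) + 1 = (a : ℕ) then ((a : ℕ) : ℝ) else 0) := by
      intro b
      rw [Matrix.mul_apply]
      refine Finset.sum_congr rfl fun a _ => ?_
      rw [Matrix.transpose_apply]
      rfl
    simp only [hmid, Matrix.transpose_apply, vandMatrix, Finset.sum_mul]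
    rw [Finset.sum_comm]
    refine Finset.sum_congr rfl fun a _ => ?_
    rcases Nat.eq_zero_or_pos (a : ℕ) with h0 | hpos
    · simp [h0]
    · obtain ⟨c, hc⟩ : ∃ c, (a : ℕ) = c + 1 := ⟨(a : ℕ) - 1, (Nat.succ_pred_eq_of_pos hpos).symm⟩
      have hcK : c < K := by omega
      rw [Finset.sum_eq_single (⟨c, hcK⟩ : Fin K)]
      · simp [hc]
      · intro b _ hb
        have hne : (b : ℕ) + 1 ≠ (a : ℕ) := by
          intro h
          apply hb
          apply Fin.ext
          simp only [Fin.val_mk]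
          omega
        simp [hne]
      · intro h; exact absurd (Finset.mem_univ _) h
  have htriple : ∀ (T : Fin N → Fin K → Fin N → ℝ),
      (∑ i, ∑ j, ∑ k, T i j k) = ∑ k, ∑ j, ∑ i, T i j k := by
    intro T
    calc (∑ i, ∑ j, ∑ k, T i j k)
        = ∑ j, ∑ i, ∑ k, T i j k := Finset.sum_comm
      _ = ∑ j, ∑ k, ∑ i, T i j k := Finset.sum_congr rfl fun j _ => Finset.sum_comm
      _ = ∑ k, ∑ j, ∑ i, T i j k := Finset.sum_comm
  rw [Finset.sum_congr rfl fun m _ => mul_comm (v m) ((P * vandMatrix N K x * (diffMatrix K)ᵀ * (vandMatrix N K x)ᵀ) m m)]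
  calc (∑ m, (P * vandMatrix N K x * (diffMatrix K)ᵀ * (vandMatrix N K x)ᵀ) m m * v m)
      = ∑ m, (∑ j : Fin K, (P * vandMatrix N K x) m j * ((j : ℕ) : ℝ) * x m ^ ((j : ℕ) - 1)) * v m := by
        exact Finset.sum_congr rfl fun m _ => by rw [hdiag m]
    _ = ∑ k, ∑ j : Fin K, (P * vandMatrix N K x) k j * (((j : ℕ) : ℝ) * x k ^ ((j : ℕ) - 1) * v k) := by
        refine Finset.sum_congr rfl fun k _ => ?_
        rw [Finset.sum_mul]
        exact Finset.sum_congr rfl fun j _ => by ring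
    _ = ∑ k, ∑ j : Fin K, (∑ i, g i j * P i k) * (((j : ℕ) : ℝ) * x k ^ ((j : ℕ) - 1) * v k) := by
        exact Finset.sum_congr rfl fun k _ => Finset.sum_congr rfl fun j _ => by rw [hkey j k]
    _ = ∑ k, ∑ j : Fin K, ∑ i, g i j * P i k * (((j : ℕ) : ℝ) * x k ^ ((j : ℕ) - 1) * v k) := by
        exact Finset.sum_congr rfl fun k _ => Finset.sum_congr rfl fun j _ => by rw [Finset.sum_mul]
    _ = ∑ i, ∑ j : Fin K, ∑ k, g i j * P i k * (((j : ℕ) : ℝ) * x k ^ ((j : ℕ) - 1) * v k) := (htriple _).symm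
    _ = ∑ i, ∑ j : Fin K, g i j * ∑ k, P i k * ((j : ℕ) : ℝ) * x k ^ ((j : ℕ) - 1) * v k := by
        refine Finset.sum_congr rfl fun i _ => Finset.sum_congr rfl fun j _ => ?_
        rw [Finset.mul_sum]
        exact Finset.sum_congr rfl fun k _ => by ring
    _ = 1 / 2 * ∑ i, ∑ j : Fin K,
          (g i j * (∑ k, P i k * ((j : ℕ) : ℝ) * x k ^ ((j : ℕ) - 1) * v k)
           + g i j * (∑ k, P i k * ((j : ℕ) : ℝ) * x k ^ ((j : ℕ) - 1) * v k)) := by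
        rw [Finset.mul_sum]
        refine Finset.sum_congr rfl fun i _ => ?_
        rw [Finset.mul_sum]
        exact Finset.sum_congr rfl fun j _ => by ring
end
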